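/- Let G and H be groups, i : H → G an injective homomorphism, and suppose there exists a sequence of homomorphisms (ρₙ : G → H) such that ρₙ ∘ i = id_H for all n and such that (ρₙ) is discriminating (for every finite B ⊆ G \ {1} there is n₀ with ρₙ(b) ≠ 1 for all b ∈ B, n ≥ n₀). Then i(H) is existentially closed in G: every finite system of equations and inequations with constants in i(H) that has a solution in G has a solution in i(H). -/
import Mathlib


/-- A subgroup `H ≤ G` is existentially closed in `G` if every finite system of
equations and inequations with constants in `H` (encoded as words in a free group on
variables and constants) which has a solution in `G` has a solution in `H`. -/
def IsExistentiallyClosed {G : Type*} [Group G] (H : Subgroup G) : Prop :=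
  ∀ (k : ℕ) (E I : Finset (FreeGroup (Fin k ⊕ H))),
    (∃ x : Fin k → G,
      (∀ w ∈ E, FreeGroup.lift (Sum.elim x (fun h : H => (h : G))) w = 1) ∧
      (∀ w ∈ I, FreeGroup.lift (Sum.elim x (fun h : H => (h : G))) w ≠ 1)) →
    (∃ x : Fin k → H,
      (∀ w ∈ E, FreeGroup.lift (Sum.elim x id) w = 1) ∧
      (∀ w ∈ I, FreeGroup.lift (Sum.elim x id) w ≠ 1))

/-- If `i : H → G` is an injective homomorphism admitting a
discriminating sequence of retractions `ρₙ : G → H` (with `ρₙ ∘ i = id`), then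
`i(H)` is existentially closed in `G`. -/
theorem stmt_15 {G H : Type*} [Group G] [Group H] (i : H →* G)
    (hi : Function.Injective i) (ρ : ℕ → (G →* H))
    (hret : ∀ n, (ρ n).comp i = MonoidHom.id H)
    (hdis : ∀ B : Finset G, (1 : G) ∉ B →
      ∃ n₀ : ℕ, ∀ n ≥ n₀, ∀ b ∈ B, ρ n b ≠ 1) :
    IsExistentiallyClosed i.range := by
  classical
  intro k E I ⟨x, hE, hI⟩
  -- the finite set of values of inequation words
  set f : FreeGroup (Fin k ⊕ i.range) →* G :=
    FreeGroup.lift (Sum.elim x (fun h : i.range => (h : G))) with hf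
  set B : Finset G := I.image f with hB
  have h1B : (1 : G) ∉ B := by
    simp only [hB, Finset.mem_image]
    rintro ⟨w, hw, hw1⟩
    exact hI w hw hw1
  obtain ⟨n₀, hn₀⟩ := hdis B h1B
  set ρ' : G →* H := ρ n₀ with hρ'
  have hretr : ∀ a : H, ρ' (i a) = a := fun a =>
    DFunLike.congr_fun (hret n₀) a
  -- candidate solution
  set x' : Fin k → i.range := fun j => ⟨i (ρ' (x j)), ⟨ρ' (x j), rfl⟩⟩ with hx'
  -- key identity
  have key : ∀ w : FreeGroup (Fin k ⊕ i.range),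
      ((FreeGroup.lift (Sum.elim x' id) w : i.range) : G) = i (ρ' (f w)) := by
    intro w
    have : (i.range.subtype).comp (FreeGroup.lift (Sum.elim x' id))
        = (i.comp ρ').comp f := by
      apply FreeGroup.ext_hom
      rintro (j | h)
      · simp [hf, hx']
      · obtain ⟨a, ha⟩ := h.2
        simp only [MonoidHom.comp_apply, FreeGroup.lift_apply_of, Sum.elim_inr, hf]
        simp [← ha, hretr]
    exact DFunLike.congr_fun this w
  refine ⟨x', fun w hw => ?_, fun w hw hcon => ?_⟩
  · have := key w
    rw [hE w hw] at this
    simp only [map_one] at this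
    exact Subtype.ext this
  · have := key w
    rw [hcon] at this
    have hne : ρ' (f w) ≠ 1 := hn₀ n₀ le_rfl (f w) (Finset.mem_image_of_mem f hw)
    apply hne
    apply hi
    simp [← this]
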